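/- Let μ,ν>0 with Sc = ν/μ ≥ 16, let ε>0, and define κ_ε=(ε/ν³)^{1/4} and κ'_β=(ε/(νμ²))^{1/4}, so κ'_β = Sc^{1/2}·κ_ε. Let t be a tracer spectrum (3D framework) with shell sums 𝐭, dissipation rate χ and wavenumber κ_θ. Let κ0 ≤ κg with 4κg ≤ κ_ε, and fix constants c1,…,c5>0. Assume: (i) for every κ∈[κg,κ_ε], c1·χ·ε^{-1/3}·κ^{-2/3} ≤ 𝐭_{κ,2κ} ≤ c2·χ·ε^{-1/3}·κ^{-2/3}; (ii) for every κ∈[κ_ε,κ'_β], c3·χ·(ν/ε)^{1/2} ≤ 𝐭_{κ,2κ} ≤ c4·χ·(ν/ε)^{1/2}; (iii) 𝐭_{κ0,∞} ≤ c5·𝐭_{κg,κ'_β}. Then there exist constants c,C>0 depending only on c1,…,c5 such that c ≤ κ_θ²·(a+b) ≤ C, where a = (κ'_β)^{-4/3}·Sc^{-1/3}·(κg^{-2/3} − κ_ε^{-2/3}) and b = (κ'_β)^{-2}·ln Sc. (Theorem 6.1, first part, of the paper.) -/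

import Mathlib

open Real

/-- Euclidean norm of a lattice vector `k ∈ ℤ^d`. -/
noncomputable def knorm {d : ℕ} (k : Fin d → ℤ) : ℝ :=
  Real.sqrt (∑ i, ((k i : ℝ)) ^ 2)

/-- Shell sum `𝐭_{κ1,κ2}` (finite upper end). -/
noncomputable def shellSum (d : ℕ) (L κ0 : ℝ) (t : (Fin d → ℤ) → ℝ) (κ1 κ2 : ℝ) : ℝ :=
  L ^ (-(d : ℤ)) * ∑' k : Fin d → ℤ,
    (if κ1 ≤ κ0 * knorm k ∧ κ0 * knorm k < κ2 then t k else 0)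

/-- Shell sum `𝐭_{κ1,∞}`. -/
noncomputable def shellSumTop (d : ℕ) (L κ0 : ℝ) (t : (Fin d → ℤ) → ℝ) (κ1 : ℝ) : ℝ :=
  L ^ (-(d : ℤ)) * ∑' k : Fin d → ℤ, (if κ1 ≤ κ0 * knorm k then t k else 0)

/-- Tracer dissipation rate `χ = μ L^{-d} κ0² Σ_k |k|² t(k)`. -/
noncomputable def chiRate (d : ℕ) (L κ0 μ : ℝ) (t : (Fin d → ℤ) → ℝ) : ℝ :=
  μ * L ^ (-(d : ℤ)) * κ0 ^ 2 * ∑' k : Fin d → ℤ, knorm k ^ 2 * t k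

/-- Indicator wavenumber squared, `κ_θ² = κ0² Σ|k|²t(k) / Σ t(k)`. -/
noncomputable def kThetaSq (d : ℕ) (κ0 : ℝ) (t : (Fin d → ℤ) → ℝ) : ℝ :=
  κ0 ^ 2 * (∑' k : Fin d → ℤ, knorm k ^ 2 * t k) / (∑' k : Fin d → ℤ, t k)

/-- A (discrete) tracer spectrum: nonnegative, vanishing at `k = 0`, not identically
zero, and with `Σ (1+|k|²) t(k) < ∞`. -/
structure IsTracerSpectrum (d : ℕ) (t : (Fin d → ℤ) → ℝ) : Prop where
  nonneg : ∀ k, 0 ≤ t k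
  map_zero : t 0 = 0
  exists_ne_zero : ∃ k, t k ≠ 0
  summable : Summable fun k : Fin d → ℤ => (1 + knorm k ^ 2) * t k

lemma knorm_nonneg {d : ℕ} (k : Fin d → ℤ) : 0 ≤ knorm k := Real.sqrt_nonneg _

lemma one_le_knorm {d : ℕ} {k : Fin d → ℤ} (hk : k ≠ 0) : 1 ≤ knorm k := by
  obtain ⟨i, hi⟩ : ∃ i, k i ≠ 0 := by
    by_contra h; push_neg at h; exact hk (funext h)
  have h1 : (1:ℝ) ≤ ((k i : ℝ)) ^ 2 := by
    have : (1:ℤ) ≤ |k i| := Int.one_le_abs hi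
    have : (1:ℝ) ≤ |(k i : ℝ)| := by exact_mod_cast this
    calc (1:ℝ) = 1^2 := by norm_num
      _ ≤ |(k i : ℝ)|^2 := by nlinarith
      _ = ((k i : ℝ))^2 := sq_abs _
  have h2 : (1:ℝ) ≤ ∑ j, ((k j : ℝ)) ^ 2 :=
    h1.trans (Finset.single_le_sum (f := fun j => ((k j : ℝ))^2) (fun j _ => sq_nonneg _) (Finset.mem_univ i))
  calc (1:ℝ) = Real.sqrt 1 := (Real.sqrt_one).symm
    _ ≤ knorm k := Real.sqrt_le_sqrt h2

lemma summable_t {d : ℕ} {t : (Fin d → ℤ) → ℝ} (h : IsTracerSpectrum d t) : Summable t := by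
  refine Summable.of_nonneg_of_le h.nonneg (fun k => ?_) h.summable
  nlinarith [h.nonneg k, sq_nonneg (knorm k)]

lemma summable_if {d : ℕ} {t : (Fin d → ℤ) → ℝ} (h : IsTracerSpectrum d t)
    (P : (Fin d → ℤ) → Prop) [DecidablePred P] :
    Summable fun k => if P k then t k else 0 := by
  refine Summable.of_nonneg_of_le (fun k => ?_) (fun k => ?_) (summable_t h)
  · split <;> simp [h.nonneg _]
  · split <;> simp [h.nonneg _]

section Shell
variable {d : ℕ} {L κ0 : ℝ} {t : (Fin d → ℤ) → ℝ}

lemma shellSum_nonneg (hL : 0 < L) (h : IsTracerSpectrum d t) (κ1 κ2 : ℝ) :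
    0 ≤ shellSum d L κ0 t κ1 κ2 := by
  unfold shellSum
  apply mul_nonneg (by positivity)
  apply tsum_nonneg
  intro k; split <;> simp [h.nonneg _]

lemma shellSum_mono (hL : 0 < L) (h : IsTracerSpectrum d t) {κ1 κ2 κ1' κ2' : ℝ}
    (h1 : κ1' ≤ κ1) (h2 : κ2 ≤ κ2') :
    shellSum d L κ0 t κ1 κ2 ≤ shellSum d L κ0 t κ1' κ2' := by
  unfold shellSum
  apply mul_le_mul_of_nonneg_left _ (by positivity)
  apply Summable.tsum_le_tsum _ (summable_if h _) (summable_if h _)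
  intro k
  split
  · next hc =>
    rw [if_pos ⟨h1.trans hc.1, hc.2.trans_le h2⟩]
  · split <;> simp [h.nonneg _]

lemma shellSum_add (hL : 0 < L) (h : IsTracerSpectrum d t) {κ1 κ2 κ3 : ℝ}
    (h12 : κ1 ≤ κ2) (h23 : κ2 ≤ κ3) :
    shellSum d L κ0 t κ1 κ3 = shellSum d L κ0 t κ1 κ2 + shellSum d L κ0 t κ2 κ3 := by
  unfold shellSum
  rw [← mul_add, ← Summable.tsum_add (summable_if h _) (summable_if h _)]
  congr 1
  apply tsum_congr
  intro k
  set x := κ0 * knorm k with hxdef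
  rcases lt_or_ge x κ1 with h₁ | h₁
  · rw [if_neg (by rintro ⟨hA, -⟩; linarith), if_neg (by rintro ⟨hA, -⟩; linarith),
      if_neg (by rintro ⟨hA, -⟩; linarith), add_zero]
  · rcases lt_or_ge x κ2 with h₂ | h₂
    · rw [if_pos ⟨h₁, by linarith⟩, if_pos ⟨h₁, h₂⟩,
        if_neg (by rintro ⟨hA, -⟩; linarith), add_zero]
    · rcases lt_or_ge x κ3 with h₃ | h₃
      · rw [if_pos ⟨by linarith, h₃⟩, if_neg (by rintro ⟨-, hB⟩; linarith),
          if_pos ⟨h₂, h₃⟩, zero_add]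
      · rw [if_neg (by rintro ⟨-, hB⟩; linarith), if_neg (by rintro ⟨-, hB⟩; linarith),
          if_neg (by rintro ⟨-, hB⟩; linarith), add_zero]

lemma shellSum_le_top (hL : 0 < L) (h : IsTracerSpectrum d t) {κ1 κ2 κ1' : ℝ}
    (h1 : κ1' ≤ κ1) :
    shellSum d L κ0 t κ1 κ2 ≤ shellSumTop d L κ0 t κ1' := by
  unfold shellSum shellSumTop
  apply mul_le_mul_of_nonneg_left _ (by positivity)
  apply Summable.tsum_le_tsum _ (summable_if h _) _
  · intro k
    split
    · next hc => rw [if_pos (h1.trans hc.1)]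
    · split <;> simp [h.nonneg _]
  · refine Summable.of_nonneg_of_le (fun k => ?_) (fun k => ?_) (summable_t h)
    · split <;> simp [h.nonneg _]
    · split <;> simp [h.nonneg _]

lemma shellSumTop_eq (hL : 0 < L) (hκ0 : 0 < κ0) (h : IsTracerSpectrum d t) :
    shellSumTop d L κ0 t κ0 = L ^ (-(d : ℤ)) * ∑' k : Fin d → ℤ, t k := by
  unfold shellSumTop
  congr 1
  apply tsum_congr
  intro k
  rcases eq_or_ne k 0 with rfl | hk
  · have : knorm (0 : Fin d → ℤ) = 0 := by simp [knorm]
    rw [this, mul_zero, if_neg (by linarith), h.map_zero]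
  · rw [if_pos]
    calc κ0 = κ0 * 1 := (mul_one _).symm
      _ ≤ κ0 * knorm k := by
        exact mul_le_mul_of_nonneg_left (one_le_knorm hk) hκ0.le

end Shell

section Dyadic
variable {d : ℕ} {L κ0 : ℝ} {t : (Fin d → ℤ) → ℝ}

lemma shellSum_self (κ1 : ℝ) : shellSum d L κ0 t κ1 κ1 = 0 := by
  unfold shellSum
  convert mul_zero (L ^ (-(d:ℤ)))
  convert tsum_zero with k
  rw [if_neg]; rintro ⟨hA, hB⟩; linarith

lemma shellSum_dyadic (hL : 0 < L) (h : IsTracerSpectrum d t) {κ : ℝ} (hκ : 0 < κ)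
    (N : ℕ) : shellSum d L κ0 t κ (2 ^ N * κ)
      = ∑ j ∈ Finset.range N, shellSum d L κ0 t (2 ^ j * κ) (2 * (2 ^ j * κ)) := by
  induction N with
  | zero => simpa using shellSum_self κ
  | succ n ih =>
    have hp : (1:ℝ) ≤ 2 ^ n := one_le_pow₀ (by norm_num)
    have h1 : κ ≤ 2 ^ n * κ := by nlinarith
    have h2 : (2:ℝ) ^ n * κ ≤ 2 ^ (n+1) * κ := by
      have : (2:ℝ) ^ n ≤ 2 ^ (n+1) := by
        apply pow_le_pow_right₀ (by norm_num) (by omega)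
      nlinarith
    rw [shellSum_add hL h h1 h2, ih, Finset.sum_range_succ]
    congr 1
    ring
end Dyadic

lemma summable_sq {d : ℕ} {t : (Fin d → ℤ) → ℝ} (h : IsTracerSpectrum d t) :
    Summable fun k : Fin d → ℤ => knorm k ^ 2 * t k := by
  refine Summable.of_nonneg_of_le (fun k => mul_nonneg (sq_nonneg _) (h.nonneg k))
    (fun k => ?_) h.summable
  nlinarith [h.nonneg k, sq_nonneg (knorm k)]

lemma tsum_t_pos {d : ℕ} {t : (Fin d → ℤ) → ℝ} (h : IsTracerSpectrum d t) :
    0 < ∑' k : Fin d → ℤ, t k := by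
  obtain ⟨k₀, hk₀⟩ := h.exists_ne_zero
  have hpos : 0 < t k₀ := lt_of_le_of_ne (h.nonneg _) (Ne.symm hk₀)
  calc 0 < t k₀ := hpos
    _ ≤ ∑' k, t k := Summable.le_tsum (summable_t h) k₀ (fun j _ => h.nonneg j)

lemma tsum_sq_pos {d : ℕ} {t : (Fin d → ℤ) → ℝ} (h : IsTracerSpectrum d t) :
    0 < ∑' k : Fin d → ℤ, knorm k ^ 2 * t k := by
  obtain ⟨k₀, hk₀⟩ := h.exists_ne_zero
  have hk₀' : k₀ ≠ 0 := fun hh => hk₀ (hh ▸ h.map_zero)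
  have hpos : 0 < t k₀ := lt_of_le_of_ne (h.nonneg _) (Ne.symm hk₀)
  have h1 : 1 ≤ knorm k₀ := one_le_knorm hk₀'
  calc (0:ℝ) < knorm k₀ ^ 2 * t k₀ := by nlinarith [sq_nonneg (knorm k₀ - 1)]
    _ ≤ ∑' k, knorm k ^ 2 * t k :=
      Summable.le_tsum (summable_sq h) k₀ (fun j _ => mul_nonneg (sq_nonneg _) (h.nonneg j))


set_option maxHeartbeats 2000000 in
/-- Theorem 6.1 (first part): 3D, large Schmidt number. -/
theorem tracer_3D_large_Schmidt
    (c1 c2 c3 c4 c5 : ℝ)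
    (hc1 : 0 < c1) (hc2 : 0 < c2) (hc3 : 0 < c3) (hc4 : 0 < c4) (hc5 : 0 < c5) :
    ∃ c C : ℝ, 0 < c ∧ 0 < C ∧
      ∀ (L μ ν ε κg κ0 Sc κε κβ' χ a b : ℝ) (t : (Fin 3 → ℤ) → ℝ),
        0 < L → 0 < μ → 0 < ν → 0 < ε →
        IsTracerSpectrum 3 t →
        κ0 = 2 * π / L →
        Sc = ν / μ →
        16 ≤ Sc →
        κε = (ε / ν ^ 3) ^ (1 / 4 : ℝ) →
        κβ' = (ε / (ν * μ ^ 2)) ^ (1 / 4 : ℝ) →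
        χ = chiRate 3 L κ0 μ t →
        a = κβ' ^ (-4 / 3 : ℝ) * Sc ^ (-1 / 3 : ℝ)
              * (κg ^ (-2 / 3 : ℝ) - κε ^ (-2 / 3 : ℝ)) →
        b = κβ' ^ (-2 : ℝ) * Real.log Sc →
        κ0 ≤ κg → 4 * κg ≤ κε →
        (∀ κ, κg ≤ κ → κ ≤ κε →
          c1 * χ * ε ^ (-1 / 3 : ℝ) * κ ^ (-2 / 3 : ℝ) ≤ shellSum 3 L κ0 t κ (2 * κ) ∧
          shellSum 3 L κ0 t κ (2 * κ) ≤ c2 * χ * ε ^ (-1 / 3 : ℝ) * κ ^ (-2 / 3 : ℝ)) →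
        (∀ κ, κε ≤ κ → κ ≤ κβ' →
          c3 * χ * (ν / ε) ^ (1 / 2 : ℝ) ≤ shellSum 3 L κ0 t κ (2 * κ) ∧
          shellSum 3 L κ0 t κ (2 * κ) ≤ c4 * χ * (ν / ε) ^ (1 / 2 : ℝ)) →
        shellSumTop 3 L κ0 t κ0 ≤ c5 * shellSum 3 L κ0 t κg κβ' →
        c ≤ kThetaSq 3 κ0 t * (a + b) ∧ kThetaSq 3 κ0 t * (a + b) ≤ C := by
  refine ⟨1 / (c5 * (8*c2 + 2*c4)), 1 / min c1 (c3/4),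
    by positivity, one_div_pos.mpr (lt_min hc1 (by linarith)), ?_⟩
  intro L μ ν ε κg κ0 Sc κε κβ' χ a b t hL hμ hν hε hts hκ0 hSc hSc16 hκε hκβ hχ ha hb
    hκ0g hgε hIn hVi hTop
  unfold chiRate at hχ
  unfold kThetaSq
  have hκ0p : 0 < κ0 := by rw [hκ0]; positivity
  have hκg : 0 < κg := hκ0p.trans_le hκ0g
  have hκεp : 0 < κε := by rw [hκε]; positivity
  have hκβp : 0 < κβ' := by rw [hκβ]; positivity
  have hScp : (0:ℝ) < Sc := by linarith
  have hgeps : κg ≤ κε := by linarith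
  have h2geps : 2 * κg ≤ κε := by linarith
  -- κβ' = Sc^{1/2} κε
  have hβs : κβ' = Sc ^ (1/2:ℝ) * κε := by
    rw [hκβ, hκε, hSc]
    rw [show ((1:ℝ)/2) = (2:ℕ) * (1/4 : ℝ) by norm_num, Real.rpow_mul (by positivity),
      Real.rpow_natCast, ← Real.mul_rpow (by positivity) (by positivity)]
    congr 1
    field_simp
  have h4 : (4:ℝ) ≤ Sc ^ (1/2:ℝ) := by
    have h16 : ((16:ℝ)) ^ (1/2:ℝ) ≤ Sc ^ (1/2:ℝ) :=
      Real.rpow_le_rpow (by norm_num) hSc16 (by norm_num)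
    have : ((16:ℝ)) ^ (1/2:ℝ) = 4 := by
      rw [show (16:ℝ) = 4 ^ (2:ℕ) by norm_num, ← Real.rpow_natCast (4:ℝ) 2,
        ← Real.rpow_mul (by norm_num)]
      norm_num
    linarith
  have hεβ : κε ≤ κβ' := by
    rw [hβs]
    exact le_mul_of_one_le_left hκεp.le (by linarith)
  have hS2 : 0 < ∑' k : Fin 3 → ℤ, knorm k ^ 2 * t k := tsum_sq_pos hts
  have hS1 : 0 < ∑' k : Fin 3 → ℤ, t k := tsum_t_pos hts
  have hχp : 0 < χ := by
    rw [hχ]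
    have : (0:ℝ) < L ^ (-(3:ℤ)) := by positivity
    positivity
  -- logarithm bookkeeping
  set x := Real.logb 2 Sc with hxdef
  have hSc1 : (1:ℝ) < Sc := by linarith
  have hlogScp : 0 < Real.log Sc := Real.log_pos hSc1
  have hlog2p : (0:ℝ) < Real.log 2 := Real.log_pos (by norm_num)
  have hx4 : (4:ℝ) ≤ x := by
    have h1 : Real.logb 2 16 ≤ Real.logb 2 Sc :=
      Real.logb_le_logb_of_le (by norm_num) (by norm_num) hSc16
    have h2 : Real.logb 2 16 = 4 := by
      rw [show (16:ℝ) = 2 ^ (4:ℝ) from by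
        rw [show (4:ℝ) = ((4:ℕ):ℝ) by norm_num, Real.rpow_natCast]; norm_num]
      exact Real.logb_rpow (by norm_num) (by norm_num)
    linarith
  have hxlog : Real.log Sc = x * Real.log 2 := by
    rw [hxdef, Real.logb]; field_simp
  have hlog2le1 : Real.log 2 ≤ 1 := by
    have := Real.log_two_lt_d9; linarith
  have hlog2ge : (1/2:ℝ) ≤ Real.log 2 := by
    have := Real.log_two_gt_d9; linarith
  have hx0 : (0:ℝ) ≤ x := by linarith
  have hxle : x ≤ 2 * Real.log Sc := by
    have := mul_le_mul_of_nonneg_left hlog2ge hx0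
    linarith
  have hxge : Real.log Sc ≤ x := by
    have := mul_le_mul_of_nonneg_left hlog2le1 hx0
    linarith
  have hSc2x : Sc = (2:ℝ) ^ x := (Real.rpow_logb (by norm_num) (by norm_num) hScp).symm
  have hSchalf : Sc ^ (1/2:ℝ) = (2:ℝ) ^ (x/2) := by
    rw [hSc2x, ← Real.rpow_mul (by norm_num)]
    ring_nf
  -- viscous dyadic counting
  set N : ℕ := Nat.floor (x/2) with hNdef
  have hNle : (N:ℝ) ≤ x/2 := Nat.floor_le (by linarith)
  have hNgt : x/2 < (N:ℝ) + 1 := Nat.lt_floor_add_one _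
  have h2N : (2:ℝ) ^ N ≤ Sc ^ (1/2:ℝ) := by
    rw [hSchalf, ← Real.rpow_natCast 2 N]
    exact Real.rpow_le_rpow_of_exponent_le (by norm_num) hNle
  have h2N1 : Sc ^ (1/2:ℝ) ≤ (2:ℝ) ^ (N+1) := by
    rw [hSchalf, ← Real.rpow_natCast 2 (N+1)]
    apply Real.rpow_le_rpow_of_exponent_le (by norm_num)
    push_cast; linarith
  have hVienne : (0:ℝ) ≤ (ν/ε) ^ (1/2:ℝ) := Real.rpow_nonneg (by positivity) _
  have hVlow : (N:ℝ) * (c3 * χ * (ν/ε) ^ (1/2:ℝ)) ≤ shellSum 3 L κ0 t κε κβ' := by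
    have hsub : shellSum 3 L κ0 t κε ((2:ℝ)^N * κε) ≤ shellSum 3 L κ0 t κε κβ' := by
      apply shellSum_mono hL hts le_rfl
      rw [hβs]
      exact mul_le_mul_of_nonneg_right h2N hκεp.le
    refine le_trans ?_ hsub
    rw [shellSum_dyadic hL hts hκεp N]
    have : (N:ℝ) * (c3 * χ * (ν/ε) ^ (1/2:ℝ))
        = ∑ _j ∈ Finset.range N, (c3 * χ * (ν/ε) ^ (1/2:ℝ)) := by
      rw [Finset.sum_const, Finset.card_range, nsmul_eq_mul]
    rw [this]
    apply Finset.sum_le_sum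
    intro j hj
    have hj' : (2:ℝ)^j ≤ 2^N := pow_le_pow_right₀ one_le_two (Finset.mem_range.mp hj).le
    have hp1 : (1:ℝ) ≤ 2^j := one_le_pow₀ (by norm_num)
    have h1 : κε ≤ 2^j * κε := le_mul_of_one_le_left hκεp.le hp1
    have h2 : (2:ℝ)^j * κε ≤ κβ' := by
      rw [hβs]
      exact mul_le_mul_of_nonneg_right (hj'.trans h2N) hκεp.le
    exact (hVi _ h1 h2).1
  have hVup : shellSum 3 L κ0 t κε κβ' ≤ ((N:ℝ)+1) * (c4 * χ * (ν/ε) ^ (1/2:ℝ)) := by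
    have hsub : shellSum 3 L κ0 t κε κβ' ≤ shellSum 3 L κ0 t κε ((2:ℝ)^(N+1) * κε) := by
      apply shellSum_mono hL hts le_rfl
      rw [hβs]
      exact mul_le_mul_of_nonneg_right h2N1 hκεp.le
    refine hsub.trans ?_
    rw [shellSum_dyadic hL hts hκεp (N+1)]
    have : ((N:ℝ)+1) * (c4 * χ * (ν/ε) ^ (1/2:ℝ))
        = ∑ _j ∈ Finset.range (N+1), (c4 * χ * (ν/ε) ^ (1/2:ℝ)) := by
      rw [Finset.sum_const, Finset.card_range, nsmul_eq_mul]
      push_cast; ring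
    rw [this]
    apply Finset.sum_le_sum
    intro j hj
    have hj' : (2:ℝ)^j ≤ 2^N :=
      pow_le_pow_right₀ one_le_two (Nat.lt_succ_iff.mp (Finset.mem_range.mp hj))
    have hp1 : (1:ℝ) ≤ 2^j := one_le_pow₀ (by norm_num)
    have h1 : κε ≤ 2^j * κε := le_mul_of_one_le_left hκεp.le hp1
    have h2 : (2:ℝ)^j * κε ≤ κβ' := by
      rw [hβs]
      exact mul_le_mul_of_nonneg_right (hj'.trans h2N) hκεp.le
    exact (hVi _ h1 h2).2
  have hc3χV : (0:ℝ) ≤ c3 * χ * (ν/ε) ^ (1/2:ℝ) := by positivity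
  have hc4χV : (0:ℝ) ≤ c4 * χ * (ν/ε) ^ (1/2:ℝ) := by positivity
  have hNge : Real.log Sc / 4 ≤ (N:ℝ) := by linarith
  have hN1le : (N:ℝ) + 1 ≤ 2 * Real.log Sc := by
    have h34 : (N:ℝ) + 1 ≤ (3/4) * x := by linarith
    linarith
  have hVlow2 : c3/4 * (χ * ((ν/ε) ^ (1/2:ℝ) * Real.log Sc)) ≤ shellSum 3 L κ0 t κε κβ' := by
    refine le_trans ?_ hVlow
    have := mul_le_mul_of_nonneg_right hNge hc3χV
    linarith
  have hVup2 : shellSum 3 L κ0 t κε κβ' ≤ 2*c4 * (χ * ((ν/ε) ^ (1/2:ℝ) * Real.log Sc)) := by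
    refine hVup.trans ?_
    have := mul_le_mul_of_nonneg_right hN1le hc4χV
    linarith
  -- inertial part
  set y := Real.logb 2 (κε/κg) with hydef
  have hy0 : 0 ≤ y := Real.logb_nonneg (by norm_num) (by
    rw [le_div_iff₀ hκg]; linarith)
  set M : ℕ := Nat.floor y + 1 with hMdef
  have hMy : (Nat.floor y : ℝ) ≤ y := Nat.floor_le hy0
  have hyM : y < (Nat.floor y : ℝ) + 1 := Nat.lt_floor_add_one _
  have h2y : (2:ℝ) ^ y = κε/κg := Real.rpow_logb (by norm_num) (by norm_num) (by positivity)
  have hjM : ∀ j : ℕ, j < M → (2:ℝ)^j * κg ≤ κε := by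
    intro j hj
    have hj' : (j:ℝ) ≤ y := by
      have h1 : (j:ℝ) ≤ (Nat.floor y : ℝ) := by exact_mod_cast Nat.lt_succ_iff.mp hj
      linarith
    have h2 : (2:ℝ)^j ≤ κε/κg := by
      rw [← h2y, ← Real.rpow_natCast 2 j]
      exact Real.rpow_le_rpow_of_exponent_le (by norm_num) hj'
    calc (2:ℝ)^j * κg ≤ (κε/κg) * κg := mul_le_mul_of_nonneg_right h2 hκg.le
      _ = κε := by field_simp
  have hεM : κε ≤ (2:ℝ)^M * κg := by
    have h1 : κε/κg ≤ (2:ℝ)^M := by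
      rw [← h2y, ← Real.rpow_natCast 2 M]
      apply Real.rpow_le_rpow_of_exponent_le (by norm_num)
      rw [hMdef]; push_cast; linarith
    calc κε = (κε/κg) * κg := by field_simp
      _ ≤ (2:ℝ)^M * κg := mul_le_mul_of_nonneg_right h1 hκg.le
  set r : ℝ := (2:ℝ) ^ (-2/3 : ℝ) with hrdef
  have hr0 : 0 ≤ r := Real.rpow_nonneg (by norm_num) _
  have hr34 : r ≤ 3/4 := by
    have h3 : r ^ (3:ℕ) ≤ (3/4:ℝ) ^ (3:ℕ) := by
      have hr3 : r ^ (3:ℕ) = ((2:ℝ) ^ (-2:ℤ) : ℝ) := by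
        rw [hrdef, ← Real.rpow_natCast _ 3, ← Real.rpow_mul (by norm_num),
          show ((-2:ℝ)/3 * (3:ℕ) : ℝ) = ((-2:ℤ):ℝ) by push_cast; ring,
          Real.rpow_intCast]
      rw [hr3]; norm_num
    exact le_of_pow_le_pow_left₀ (by norm_num) (by norm_num) h3
  have hgeom : ∑ j ∈ Finset.range M, r^j ≤ 4 := by
    calc ∑ j ∈ Finset.range M, r^j ≤ ∑ j ∈ Finset.range M, (3/4:ℝ)^j :=
          Finset.sum_le_sum (fun j _ => pow_le_pow_left₀ hr0 hr34 j)
      _ ≤ 4 := by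
          rw [geom_sum_eq (by norm_num) M]
          have h1 : (0:ℝ) ≤ (3/4:ℝ)^M := by positivity
          rw [div_le_iff_of_neg (by norm_num)]
          linarith
  have hshellpow : ∀ j : ℕ, ((2:ℝ)^j * κg) ^ (-2/3:ℝ) = r^j * κg ^ (-2/3:ℝ) := by
    intro j
    rw [Real.mul_rpow (by positivity) hκg.le]
    congr 1
    rw [← Real.rpow_natCast 2 j, ← Real.rpow_mul (by norm_num), mul_comm,
      Real.rpow_mul (by norm_num), Real.rpow_natCast]
  have hIup : shellSum 3 L κ0 t κg κε ≤ 4*c2 * (χ * (ε^(-1/3:ℝ) * κg^(-2/3:ℝ))) := by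
    have hsub : shellSum 3 L κ0 t κg κε ≤ shellSum 3 L κ0 t κg ((2:ℝ)^M * κg) :=
      shellSum_mono hL hts le_rfl hεM
    refine hsub.trans ?_
    rw [shellSum_dyadic hL hts hκg M]
    calc ∑ j ∈ Finset.range M, shellSum 3 L κ0 t ((2:ℝ)^j*κg) (2*((2:ℝ)^j*κg))
        ≤ ∑ j ∈ Finset.range M, c2 * χ * ε^(-1/3:ℝ) * (r^j * κg^(-2/3:ℝ)) := by
          apply Finset.sum_le_sum
          intro j hj
          have hp1 : (1:ℝ) ≤ 2^j := one_le_pow₀ (by norm_num)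
          have h1 : κg ≤ 2^j * κg := le_mul_of_one_le_left hκg.le hp1
          have h2 := hjM j (Finset.mem_range.mp hj)
          have h3 := (hIn _ h1 h2).2
          rwa [hshellpow j] at h3
      _ = (c2 * χ * ε^(-1/3:ℝ) * κg^(-2/3:ℝ)) * ∑ j ∈ Finset.range M, r^j := by
          rw [Finset.mul_sum]; apply Finset.sum_congr rfl; intros; ring
      _ ≤ 4*c2 * (χ * (ε^(-1/3:ℝ) * κg^(-2/3:ℝ))) := by
          have hnn : (0:ℝ) ≤ c2 * χ * ε^(-1/3:ℝ) * κg^(-2/3:ℝ) := by positivity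
          have h5 := mul_le_mul_of_nonneg_left hgeom hnn
          linarith
  have hIlow : c1 * (χ * (ε^(-1/3:ℝ) * κg^(-2/3:ℝ))) ≤ shellSum 3 L κ0 t κg κε := by
    have h1 := (hIn κg le_rfl hgeps).1
    have h2 : shellSum 3 L κ0 t κg (2*κg) ≤ shellSum 3 L κ0 t κg κε :=
      shellSum_mono hL hts le_rfl h2geps
    calc c1 * (χ * (ε^(-1/3:ℝ) * κg^(-2/3:ℝ))) = c1 * χ * ε^(-1/3:ℝ) * κg^(-2/3:ℝ) := by ring
      _ ≤ shellSum 3 L κ0 t κg (2*κg) := h1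
      _ ≤ _ := h2
  -- difference D comparisons
  have hDκ : κε ^ (-2/3:ℝ) ≤ κg ^ (-2/3:ℝ) :=
    Real.rpow_le_rpow_of_nonpos hκg (by linarith) (by norm_num)
  have hhalf : κε ^ (-2/3:ℝ) ≤ (1/2) * κg ^ (-2/3:ℝ) := by
    have h1 : κε ^ (-2/3:ℝ) ≤ ((4:ℝ)*κg) ^ (-2/3:ℝ) :=
      Real.rpow_le_rpow_of_nonpos (by positivity) hgε (by norm_num)
    have h2 : ((4:ℝ)*κg) ^ (-2/3:ℝ) = (4:ℝ)^(-2/3:ℝ) * κg^(-2/3:ℝ) :=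
      Real.mul_rpow (by norm_num) hκg.le
    have h3 : (4:ℝ)^(-2/3:ℝ) ≤ (1/2:ℝ) := by
      have h4 : (4:ℝ)^(-2/3:ℝ) ≤ (4:ℝ)^(-1/2:ℝ) :=
        Real.rpow_le_rpow_of_exponent_le (by norm_num) (by norm_num)
      have h5 : (4:ℝ)^(-1/2:ℝ) = 1/2 := by
        rw [show (4:ℝ) = 2^(2:ℕ) by norm_num, ← Real.rpow_natCast 2 2,
          ← Real.rpow_mul (by norm_num), show (((2:ℕ):ℝ) * (-1/2:ℝ)) = -1 by norm_num,
          Real.rpow_neg_one]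
        norm_num
      linarith
    have h6 : (0:ℝ) ≤ κg^(-2/3:ℝ) := Real.rpow_nonneg hκg.le _
    have h7 := mul_le_mul_of_nonneg_right h3 h6
    linarith only [h1, h2, h7, h2 ▸ h1]
  have hεnn : (0:ℝ) ≤ ε^(-1/3:ℝ) := Real.rpow_nonneg hε.le _
  have hD0 : (0:ℝ) ≤ κg^(-2/3:ℝ) - κε^(-2/3:ℝ) := by linarith
  have hP0 : (0:ℝ) ≤ χ * (ε^(-1/3:ℝ)*(κg^(-2/3:ℝ)-κε^(-2/3:ℝ))) :=
    mul_nonneg hχp.le (mul_nonneg hεnn hD0)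
  have hQ0 : (0:ℝ) < χ * ((ν/ε)^(1/2:ℝ)*Real.log Sc) :=
    mul_pos hχp (mul_pos (Real.rpow_pos_of_pos (div_pos hν hε) _) hlogScp)
  have hsplitT : shellSum 3 L κ0 t κg κβ'
      = shellSum 3 L κ0 t κg κε + shellSum 3 L κ0 t κε κβ' :=
    shellSum_add hL hts hgeps hεβ
  -- lower bound on the shell sum
  have hTlow : min c1 (c3/4) * (χ * (ε^(-1/3:ℝ)*(κg^(-2/3:ℝ)-κε^(-2/3:ℝ)))
        + χ * ((ν/ε)^(1/2:ℝ)*Real.log Sc)) ≤ shellSum 3 L κ0 t κg κβ' := by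
    have hPle : χ * (ε^(-1/3:ℝ)*(κg^(-2/3:ℝ)-κε^(-2/3:ℝ))) ≤ χ * (ε^(-1/3:ℝ)*κg^(-2/3:ℝ)) := by
      apply mul_le_mul_of_nonneg_left _ hχp.le
      apply mul_le_mul_of_nonneg_left _ hεnn
      have h7 := Real.rpow_nonneg hκεp.le (-2/3:ℝ)
      linarith only [h7]
    have e1 : c1 * (χ * (ε^(-1/3:ℝ)*(κg^(-2/3:ℝ)-κε^(-2/3:ℝ)))) ≤ shellSum 3 L κ0 t κg κε :=
      le_trans (mul_le_mul_of_nonneg_left hPle hc1.le) hIlow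
    have m1 := mul_le_mul_of_nonneg_right (min_le_left c1 (c3/4)) hP0
    have m2 := mul_le_mul_of_nonneg_right (min_le_right c1 (c3/4)) hQ0.le
    have e2 := hVlow2
    rw [hsplitT]
    linarith only [e1, e2, m1, m2]
  -- upper bound on the shell sum
  have hTup : shellSum 3 L κ0 t κg κβ' ≤ (8*c2 + 2*c4) * (χ * (ε^(-1/3:ℝ)*(κg^(-2/3:ℝ)-κε^(-2/3:ℝ)))
        + χ * ((ν/ε)^(1/2:ℝ)*Real.log Sc)) := by
    have hPge : χ * (ε^(-1/3:ℝ)*κg^(-2/3:ℝ))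
        ≤ 2 * (χ * (ε^(-1/3:ℝ)*(κg^(-2/3:ℝ)-κε^(-2/3:ℝ)))) := by
      have : κg^(-2/3:ℝ) ≤ 2*(κg^(-2/3:ℝ)-κε^(-2/3:ℝ)) := by linarith
      have h7 := mul_le_mul_of_nonneg_left this (mul_nonneg hχp.le hεnn)
      linarith only [h7]
    have e1 : shellSum 3 L κ0 t κg κε
        ≤ 8*c2 * (χ * (ε^(-1/3:ℝ)*(κg^(-2/3:ℝ)-κε^(-2/3:ℝ)))) := by
      refine hIup.trans ?_
      have h7 := mul_le_mul_of_nonneg_left hPge (by linarith : (0:ℝ) ≤ 4*c2)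
      linarith only [h7]
    have e2 := hVup2
    have n1 : (0:ℝ) ≤ 2*c4 * (χ * (ε^(-1/3:ℝ)*(κg^(-2/3:ℝ)-κε^(-2/3:ℝ)))) := by positivity
    have n2 : (0:ℝ) ≤ 8*c2 * (χ * ((ν/ε)^(1/2:ℝ)*Real.log Sc)) := by positivity
    rw [hsplitT]
    linarith only [e1, e2, n1, n2]
  -- top shell sum
  have hTopLow : shellSum 3 L κ0 t κg κβ' ≤ shellSumTop 3 L κ0 t κ0 :=
    shellSum_le_top hL hts hκ0g
  have hTtop_pos : 0 < shellSumTop 3 L κ0 t κ0 := by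
    have hmin : 0 < min c1 (c3/4) := lt_min hc1 (by linarith)
    have hx1 := mul_pos hmin (show (0:ℝ) <
      χ * (ε^(-1/3:ℝ)*(κg^(-2/3:ℝ)-κε^(-2/3:ℝ))) + χ * ((ν/ε)^(1/2:ℝ)*Real.log Sc) from by
        linarith only [hP0, hQ0])
    linarith only [hTlow, hTopLow, hx1]
  -- rpow algebra
  have ka : κβ' ^ (-4/3 : ℝ) * Sc ^ (-1/3 : ℝ) = μ * ε ^ (-1/3:ℝ) := by
    rw [hκβ, hSc, ← Real.rpow_mul (by positivity : (0:ℝ) ≤ ε/(ν*μ^2)),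
      show ((1:ℝ)/4 * (-4/3 : ℝ)) = (-1/3:ℝ) by norm_num,
      ← Real.mul_rpow (by positivity) (by positivity),
      show (ε/(ν*μ^2) * (ν/μ) : ℝ) = ε/μ^3 by field_simp,
      Real.div_rpow hε.le (by positivity), ← Real.rpow_natCast μ 3,
      ← Real.rpow_mul hμ.le, show (((3:ℕ):ℝ) * (-1/3:ℝ)) = -1 by norm_num,
      Real.rpow_neg_one, div_eq_mul_inv, inv_inv, mul_comm]
  have kb : κβ' ^ (-2 : ℝ) = μ * (ν/ε) ^ (1/2:ℝ) := by
    rw [hκβ, ← Real.rpow_mul (by positivity),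
      show ((1:ℝ)/4 * (-2 : ℝ)) = (-(1/2):ℝ) by norm_num,
      Real.rpow_neg (by positivity), ← Real.inv_rpow (by positivity),
      show ((ε/(ν*μ^2))⁻¹ : ℝ) = μ^2 * (ν/ε) by field_simp,
      Real.mul_rpow (by positivity) (by positivity), ← Real.rpow_natCast μ 2,
      ← Real.rpow_mul hμ.le, show (((2:ℕ):ℝ) * (1/2:ℝ)) = 1 by norm_num,
      Real.rpow_one]
  have habW : a + b = μ * (ε^(-1/3:ℝ)*(κg^(-2/3:ℝ)-κε^(-2/3:ℝ))
      + (ν/ε)^(1/2:ℝ)*Real.log Sc) := by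
    rw [ha, hb, ka, kb]; ring
  -- key identity
  have hkey : (κ0 ^ 2 * (∑' k : Fin 3 → ℤ, knorm k ^ 2 * t k) / (∑' k : Fin 3 → ℤ, t k)) * (a + b)
      = (χ * (ε^(-1/3:ℝ)*(κg^(-2/3:ℝ)-κε^(-2/3:ℝ))) + χ * ((ν/ε)^(1/2:ℝ)*Real.log Sc))
        / shellSumTop 3 L κ0 t κ0 := by
    rw [shellSumTop_eq hL hκ0p hts, habW, hχ]
    have hLz : (0:ℝ) < (L:ℝ) ^ (-(3:ℤ)) := by positivity
    field_simp
  rw [hkey]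
  have hPQpos : (0:ℝ) < χ * (ε^(-1/3:ℝ)*(κg^(-2/3:ℝ)-κε^(-2/3:ℝ)))
      + χ * ((ν/ε)^(1/2:ℝ)*Real.log Sc) := by linarith only [hP0, hQ0]
  constructor
  · rw [le_div_iff₀ hTtop_pos]
    have h8 : shellSumTop 3 L κ0 t κ0 ≤ (c5 * (8*c2 + 2*c4)) * (χ * (ε^(-1/3:ℝ)*(κg^(-2/3:ℝ)-κε^(-2/3:ℝ)))
        + χ * ((ν/ε)^(1/2:ℝ)*Real.log Sc)) := by
      refine hTop.trans ?_
      have h7 := mul_le_mul_of_nonneg_left hTup hc5.le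
      linarith only [h7]
    have hK : (0:ℝ) < c5 * (8*c2 + 2*c4) := by positivity
    calc 1/(c5*(8*c2+2*c4)) * shellSumTop 3 L κ0 t κ0
        ≤ 1/(c5*(8*c2+2*c4)) * ((c5 * (8*c2 + 2*c4)) * (χ * (ε^(-1/3:ℝ)*(κg^(-2/3:ℝ)-κε^(-2/3:ℝ)))
          + χ * ((ν/ε)^(1/2:ℝ)*Real.log Sc))) :=
          mul_le_mul_of_nonneg_left h8 (by positivity)
      _ = χ * (ε^(-1/3:ℝ)*(κg^(-2/3:ℝ)-κε^(-2/3:ℝ))) + χ * ((ν/ε)^(1/2:ℝ)*Real.log Sc) := by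
          field_simp
  · rw [div_le_iff₀ hTtop_pos]
    have hmin : 0 < min c1 (c3/4) := lt_min hc1 (by linarith)
    have h9 : min c1 (c3/4) * (χ * (ε^(-1/3:ℝ)*(κg^(-2/3:ℝ)-κε^(-2/3:ℝ)))
        + χ * ((ν/ε)^(1/2:ℝ)*Real.log Sc)) ≤ shellSumTop 3 L κ0 t κ0 :=
      hTlow.trans hTopLow
    calc χ * (ε^(-1/3:ℝ)*(κg^(-2/3:ℝ)-κε^(-2/3:ℝ))) + χ * ((ν/ε)^(1/2:ℝ)*Real.log Sc)
        = 1/(min c1 (c3/4)) * (min c1 (c3/4) * (χ * (ε^(-1/3:ℝ)*(κg^(-2/3:ℝ)-κε^(-2/3:ℝ)))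
          + χ * ((ν/ε)^(1/2:ℝ)*Real.log Sc))) := by
          field_simp
      _ ≤ 1/(min c1 (c3/4)) * shellSumTop 3 L κ0 t κ0 :=
          mul_le_mul_of_nonneg_left h9 (by positivity)
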